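/- For every simple regular expression E over an alphabet α and every word w over α: w ∈ L(E) if and only if there exists F ∈ ∂_w(E) with ε ∈ L(F). -/

import Mathlib

open scoped Classical Computability

/-- The Antimirov partial derivative of a regular expression with respect to a symbol. -/
noncomputable def aderiv {α : Type*} (a : α) : RegularExpression α → Set (RegularExpression α)
  | .zero => ∅
  | .epsilon => ∅
  | .char b => if b = a then {1} else ∅
  | .plus E₁ E₂ => aderiv a E₁ ∪ aderiv a E₂
  | .comp E₁ E₂ =>
      if [] ∈ E₁.matches' then ((· * E₂) '' aderiv a E₁) ∪ aderiv a E₂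
      else (· * E₂) '' aderiv a E₁
  | .star E₁ => (· * E₁.star) '' aderiv a E₁

/-- Iterated Antimirov partial derivative with respect to a word. -/
noncomputable def aderivWord {α : Type*} : List α → RegularExpression α → Set (RegularExpression α)
  | [], E => {E}
  | a :: w, E => ⋃ F ∈ aderiv a E, aderivWord w F

/-- Left quotient of a language by a word. -/
def lquot {α : Type*} (w : List α) (L : Language α) : Language α := {v | w ++ v ∈ L}

private lemma cons_mem_kstar_iff {α : Type*} {l : Language α} {a : α} {v : List α} :
    a :: v ∈ l∗ ↔ ∃ s t, a :: s ∈ l ∧ t ∈ l∗ ∧ v = s ++ t := by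
  constructor
  · intro h
    rw [Language.mem_kstar_iff_exists_nonempty] at h
    obtain ⟨S, hS, hmem⟩ := h
    cases S with
    | nil => simp at hS
    | cons y S =>
      obtain ⟨hy, hyne⟩ := hmem y (by simp)
      cases y with
      | nil => exact absurd rfl hyne
      | cons b s =>
        simp only [List.flatten_cons, List.cons_append, List.cons.injEq] at hS
        obtain ⟨rfl, rfl⟩ := hS
        exact ⟨s, S.flatten, hy, Language.join_mem_kstar fun z hz => (hmem z (by simp [hz])).1,
          rfl⟩
  · rintro ⟨s, t, hs, ht, rfl⟩
    rw [Language.mem_kstar] at ht ⊢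
    obtain ⟨S, rfl, hS⟩ := ht
    refine ⟨(a :: s) :: S, by simp, fun y hy => ?_⟩
    rcases List.mem_cons.mp hy with rfl | hy'
    · exact hs
    · exact hS y hy' 

private lemma mem_aderiv {α : Type*} (a : α) (v : List α) (E : RegularExpression α) :
    a :: v ∈ E.matches' ↔ ∃ F ∈ aderiv a E, v ∈ F.matches' := by
  induction E generalizing v with
  | zero => simp [aderiv]
  | epsilon => simp [aderiv, Language.mem_one]
  | char b =>
    simp only [RegularExpression.matches'_char, aderiv]
    constructor
    · intro h
      replace h : a :: v = [b] := h
      simp only [List.cons.injEq] at h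
      obtain ⟨rfl, rfl⟩ := h
      simp [RegularExpression.matches'_epsilon, Language.mem_one]
    · rintro ⟨F, hF, hv⟩
      split_ifs at hF with hba
      · subst hba
        simp only [Set.mem_singleton_iff] at hF
        subst hF
        rw [RegularExpression.matches'_epsilon, Language.mem_one] at hv
        subst hv; rfl
      · simp at hF
  | plus E₁ E₂ ih₁ ih₂ =>
    rw [show E₁.plus E₂ = E₁ + E₂ from rfl, RegularExpression.matches'_add, Language.mem_add, ih₁ v, ih₂ v]
    rw [show aderiv a (E₁ + E₂) = aderiv a E₁ ∪ aderiv a E₂ from rfl]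
    constructor
    · rintro (⟨F, hF, hv⟩ | ⟨F, hF, hv⟩)
      · exact ⟨F, Set.mem_union_left _ hF, hv⟩
      · exact ⟨F, Set.mem_union_right _ hF, hv⟩
    · rintro ⟨F, hF, hv⟩
      rcases (Set.mem_union _ _ _).mp hF with hF | hF
      · exact Or.inl ⟨F, hF, hv⟩
      · exact Or.inr ⟨F, hF, hv⟩
  | comp E₁ E₂ ih₁ ih₂ =>
    rw [show (E₁.comp E₂) = E₁ * E₂ from rfl, RegularExpression.matches'_mul]
    simp only [aderiv]
    constructor
    · intro h
      rw [Language.mem_mul] at h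
      obtain ⟨x, hx, y, hy, hxy⟩ := h
      cases x with
      | nil =>
        simp only [List.nil_append] at hxy
        subst hxy
        rw [ih₂] at hy
        obtain ⟨F, hF, hv⟩ := hy
        rw [if_pos hx]
        exact ⟨F, Or.inr hF, hv⟩
      | cons b s =>
        simp only [List.cons_append, List.cons.injEq] at hxy
        obtain ⟨rfl, rfl⟩ := hxy
        rw [ih₁] at hx
        obtain ⟨F, hF, hs⟩ := hx
        have hv : s ++ y ∈ (F * E₂).matches' := by
          rw [RegularExpression.matches'_mul]
          exact Language.append_mem_mul hs hy
        split_ifs with h1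
        · exact ⟨F * E₂, Or.inl ⟨F, hF, rfl⟩, hv⟩
        · exact ⟨F * E₂, ⟨F, hF, rfl⟩, hv⟩
    · intro h
      have key : ∀ F ∈ (· * E₂) '' aderiv a E₁, v ∈ F.matches' →
          a :: v ∈ E₁.matches' * E₂.matches' := by
        rintro F ⟨G, hG, rfl⟩ hv
        rw [RegularExpression.matches'_mul, Language.mem_mul] at hv
        obtain ⟨x, hx, y, hy, rfl⟩ := hv
        have : a :: x ∈ E₁.matches' := (ih₁ x).2 ⟨G, hG, hx⟩
        exact Language.append_mem_mul this hy
      split_ifs at h with h1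
      · obtain ⟨F, hF | hF, hv⟩ := h
        · exact key F hF hv
        · have : a :: v ∈ E₂.matches' := (ih₂ v).2 ⟨F, hF, hv⟩
          exact Language.append_mem_mul h1 this
      · obtain ⟨F, hF, hv⟩ := h
        exact key F hF hv
  | star E₁ ih =>
    rw [RegularExpression.matches'_star, cons_mem_kstar_iff]
    simp only [aderiv]
    constructor
    · rintro ⟨s, t, hs, ht, rfl⟩
      rw [ih] at hs
      obtain ⟨F, hF, hs'⟩ := hs
      refine ⟨F * E₁.star, ⟨F, hF, rfl⟩, ?_⟩
      rw [RegularExpression.matches'_mul]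
      exact Language.append_mem_mul hs' (by rwa [RegularExpression.matches'_star])
    · rintro ⟨F, ⟨G, hG, rfl⟩, hv⟩
      rw [RegularExpression.matches'_mul, Language.mem_mul] at hv
      obtain ⟨s, hs, t, ht, rfl⟩ := hv
      rw [RegularExpression.matches'_star] at ht
      exact ⟨s, t, (ih s).2 ⟨G, hG, hs⟩, ht, rfl⟩

theorem antimirov_membership {α : Type*} (w : List α) (E : RegularExpression α) :
    w ∈ E.matches' ↔ ∃ F ∈ aderivWord w E, [] ∈ F.matches' := by
  induction w generalizing E with
  | nil => simp [aderivWord]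
  | cons a w ih =>
    rw [mem_aderiv]
    simp only [aderivWord, Set.mem_iUnion, exists_prop]
    constructor
    · rintro ⟨F, hF, hv⟩
      obtain ⟨G, hG, h0⟩ := (ih F).1 hv
      exact ⟨G, ⟨F, hF, hG⟩, h0⟩
    · rintro ⟨G, ⟨F, hF, hG⟩, h0⟩
      exact ⟨F, hF, (ih F).2 ⟨G, hG, h0⟩⟩
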